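/- arXiv:0903.4056 — 5 statements merged into one kernel-verified Lean document; each statement's English description precedes it below -/
import Mathlib

section
/- In the two-animal system above, if the initial distance satisfies ‖x₁(0) − x₂(0)‖ < ξ, then the distance ‖x₁(t) − x₂(t)‖ is strictly increasing in t; if ‖x₁(0) − x₂(0)‖ > ξ it is strictly decreasing; and if ‖x₁(0) − x₂(0)‖ = ξ it is constant. -/
/-- Two-animal system: the inter-animal distance is strictly increasing if initially
below ξ, strictly decreasing if initially above ξ, and constant if initially equal to ξ. -/
theorem two_animal_distance_monotone (ξ : ℝ) (hξ : 0 < ξ)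
    (x₁ x₂ : ℝ → EuclideanSpace ℝ (Fin 2))
    (hne : ∀ t : ℝ, 0 ≤ t → x₁ t ≠ x₂ t)
    (hode₁ : ∀ t : ℝ, 0 ≤ t → HasDerivAt x₁
      ((x₂ t - x₁ t) - (ξ^2 / ‖x₂ t - x₁ t‖^2) • (x₂ t - x₁ t)) t)
    (hode₂ : ∀ t : ℝ, 0 ≤ t → HasDerivAt x₂
      ((x₁ t - x₂ t) - (ξ^2 / ‖x₁ t - x₂ t‖^2) • (x₁ t - x₂ t)) t) :
    (‖x₁ 0 - x₂ 0‖ < ξ → StrictMonoOn (fun t => ‖x₁ t - x₂ t‖) (Set.Ici 0)) ∧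
    (ξ < ‖x₁ 0 - x₂ 0‖ → StrictAntiOn (fun t => ‖x₁ t - x₂ t‖) (Set.Ici 0)) ∧
    (‖x₁ 0 - x₂ 0‖ = ξ → ∀ t : ℝ, 0 ≤ t → ‖x₁ t - x₂ t‖ = ξ) := by
  set d : ℝ → EuclideanSpace ℝ (Fin 2) := fun t => x₁ t - x₂ t with hd
  have hdne : ∀ t, 0 ≤ t → d t ≠ 0 := fun t ht => sub_ne_zero.mpr (hne t ht)
  have hdd : ∀ t, 0 ≤ t → HasDerivAt d ((2*ξ^2/‖d t‖^2 - 2) • d t) t := by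
    intro t ht
    have h := (hode₁ t ht).sub (hode₂ t ht)
    refine h.congr_deriv (Eq.symm ?_)
    have e1 : x₂ t - x₁ t = -(d t) := by simp [hd]
    rw [e1, norm_neg]
    show _ = (-(d t) - (ξ^2 / ‖d t‖^2) • -(d t)) - (d t - (ξ^2 / ‖d t‖^2) • d t)
    module
  have hu : ∀ t, 0 ≤ t → HasDerivAt (fun s => ‖d s‖^2) (4*(ξ^2 - ‖d t‖^2)) t := by
    intro t ht
    have h := (hdd t ht).inner ℝ (hdd t ht)
    simp only [real_inner_smul_left, real_inner_smul_right,
      real_inner_self_eq_norm_sq] at h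
    have hne0 : ‖d t‖^2 ≠ 0 := pow_ne_zero 2 (norm_ne_zero_iff.mpr (hdne t ht))
    refine h.congr_deriv (Eq.symm ?_)
    field_simp [norm_ne_zero_iff.mpr (hdne t ht)]
    ring
  -- the auxiliary function with zero derivative
  have hg : ∀ t, 0 ≤ t → HasDerivAt
      (fun s => (‖d s‖^2 - ξ^2) * Real.exp (4*s)) 0 t := by
    intro t ht
    have h := ((hu t ht).sub_const (ξ^2)).mul
      ((hasDerivAt_id t).const_mul 4).exp
    refine h.congr_deriv (Eq.symm ?_)
    ring
  have key : ∀ t, 0 ≤ t → ‖d t‖^2 = ξ^2 + (‖d 0‖^2 - ξ^2) * Real.exp (-(4*t)) := by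
    intro t ht
    have hconst := constant_of_has_deriv_right_zero
      (f := fun s => (‖d s‖^2 - ξ^2) * Real.exp (4*s)) (a := 0) (b := t)
      (fun s hs => ((hg s hs.1).continuousAt).continuousWithinAt)
      (fun s hs => ((hg s hs.1).hasDerivWithinAt))
      t ⟨ht, le_refl t⟩
    simp only [mul_zero, Real.exp_zero, mul_one] at hconst
    have hexp : Real.exp (4*t) ≠ 0 := Real.exp_ne_zero _
    have : Real.exp (-(4*t)) = (Real.exp (4*t))⁻¹ := by
      rw [Real.exp_neg]
    rw [this]
    field_simp
    linarith [hconst]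
  have sqrtkey : ∀ t, 0 ≤ t → ‖d t‖ = Real.sqrt (ξ^2 + (‖d 0‖^2 - ξ^2) * Real.exp (-(4*t))) := by
    intro t ht
    rw [← key t ht, Real.sqrt_sq (norm_nonneg _)]
  refine ⟨?_, ?_, ?_⟩
  · intro h s hs t ht hst
    have hC : ‖d 0‖^2 - ξ^2 < 0 := by
      nlinarith [norm_nonneg (d 0)]
    have hlt : ‖d s‖^2 < ‖d t‖^2 := by
      rw [key s hs, key t ht]
      have : Real.exp (-(4*t)) < Real.exp (-(4*s)) := Real.exp_lt_exp.mpr (by linarith)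
      nlinarith
    simp only [hd] at hlt ⊢
    have := Real.sqrt_lt_sqrt (sq_nonneg _) hlt
    rwa [Real.sqrt_sq (norm_nonneg _), Real.sqrt_sq (norm_nonneg _)] at this
  · intro h s hs t ht hst
    have hC : 0 < ‖d 0‖^2 - ξ^2 := by nlinarith [norm_nonneg (d 0)]
    have hlt : ‖d t‖^2 < ‖d s‖^2 := by
      rw [key s hs, key t ht]
      have : Real.exp (-(4*t)) < Real.exp (-(4*s)) := Real.exp_lt_exp.mpr (by linarith)
      nlinarith
    simp only [hd] at hlt ⊢
    have := Real.sqrt_lt_sqrt (sq_nonneg _) hlt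
    rwa [Real.sqrt_sq (norm_nonneg _), Real.sqrt_sq (norm_nonneg _)] at this
  · intro h t ht
    have : ‖d t‖^2 = ξ^2 := by
      rw [key t ht]; simp [hd] at h ⊢; rw [h]; ring
    have := congrArg Real.sqrt this
    rwa [Real.sqrt_sq (norm_nonneg _), Real.sqrt_sq hξ.le] at this
end

section
/- Let x ∈ (ℝ²)^N be a configuration of N ≥ 2 distinct points, and for each i let C_i(x) = argmin_{j ≠ i} ‖x_i − x_j‖ be the set of closest neighbors of i. If every closest neighbor of every point i lies at distance exactly ξ > 0 from x_i, then for every i we have 1 ≤ |C_i(x)| ≤ 6. -/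
open Complex

noncomputable def bucketC (w : ℂ) : ℤ := ⌊3 * w.arg / Real.pi⌋ % 6

lemma cos_gt_half {t : ℝ} (ht : |t| < Real.pi / 3) : 1/2 < Real.cos t := by
  have h1 : Real.cos (Real.pi / 3) = 1/2 := Real.cos_pi_div_three
  have h2 : Real.cos (Real.pi/3) < Real.cos |t| :=
    Real.cos_lt_cos_of_nonneg_of_le_pi (abs_nonneg t)
      (by linarith [Real.pi_pos]) ht
  rwa [h1, Real.cos_abs] at h2

theorem key (w z : ℂ) (ξ : ℝ) (hξ : 0 < ξ) (hw : ‖w‖ = ξ)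
    (hz : ‖z‖ = ξ) (hb : bucketC w = bucketC z) :
    dist w z < ξ := by
  -- show cos (arg w - arg z) > 1/2 up to 2π shift
  set a := w.arg with ha
  set b := z.arg with hb'
  have hπ := Real.pi_pos
  have haI : a ∈ Set.Ioc (-Real.pi) Real.pi := ⟨Complex.neg_pi_lt_arg w, Complex.arg_le_pi w⟩
  have hbI : b ∈ Set.Ioc (-Real.pi) Real.pi := ⟨Complex.neg_pi_lt_arg z, Complex.arg_le_pi z⟩
  -- floor bounds
  have hfa : (-3 : ℤ) ≤ ⌊3 * a / Real.pi⌋ ∧ ⌊3 * a / Real.pi⌋ ≤ 3 := by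
    constructor
    · apply Int.le_floor.mpr
      push_cast
      rw [le_div_iff₀ hπ]; nlinarith [haI.1]
    · have : 3 * a / Real.pi ≤ 3 := by rw [div_le_iff₀ hπ]; nlinarith [haI.2]
      have h3 : ⌊3 * a / Real.pi⌋ ≤ ⌊(3:ℝ)⌋ := Int.floor_le_floor this
      simpa using h3
  have hfb : (-3 : ℤ) ≤ ⌊3 * b / Real.pi⌋ ∧ ⌊3 * b / Real.pi⌋ ≤ 3 := by
    constructor
    · apply Int.le_floor.mpr
      push_cast
      rw [le_div_iff₀ hπ]; nlinarith [hbI.1]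
    · have : 3 * b / Real.pi ≤ 3 := by rw [div_le_iff₀ hπ]; nlinarith [hbI.2]
      have h3 : ⌊3 * b / Real.pi⌋ ≤ ⌊(3:ℝ)⌋ := Int.floor_le_floor this
      simpa using h3
  -- from bucket equality: floors equal or {−3,3}
  have hcase : ⌊3 * a / Real.pi⌋ = ⌊3 * b / Real.pi⌋ ∨
      (⌊3 * a / Real.pi⌋ = 3 ∧ ⌊3 * b / Real.pi⌋ = -3) ∨
      (⌊3 * a / Real.pi⌋ = -3 ∧ ⌊3 * b / Real.pi⌋ = 3) := by
    unfold bucketC at hb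
    rw [← ha, ← hb'] at hb
    omega
  -- key cosine bound
  have hcos : 1/2 < Real.cos (a - b) := by
    rcases hcase with h | h | h
    · -- same floor, |a - b| < π/3
      apply cos_gt_half
      have l1 := Int.floor_le (3 * a / Real.pi)
      have l2 := Int.lt_floor_add_one (3 * a / Real.pi)
      have l3 := Int.floor_le (3 * b / Real.pi)
      have l4 := Int.lt_floor_add_one (3 * b / Real.pi)
      rw [h] at l1 l2
      rw [div_lt_iff₀ hπ] at l2 l4
      rw [le_div_iff₀ hπ] at l1 l3
      rw [abs_lt]
      constructor <;> nlinarith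
    · -- a = π, b ∈ (−π, −2π/3)
      have ha3 : a = Real.pi := by
        have := Int.floor_le (3 * a / Real.pi)
        rw [h.1] at this
        have : Real.pi ≤ a := by
          rw [le_div_iff₀ hπ] at this; push_cast at this; nlinarith
        linarith [haI.2]
      have hb3 : b < -2/3 * Real.pi := by
        have := Int.lt_floor_add_one (3 * b / Real.pi)
        rw [h.2] at this
        rw [div_lt_iff₀ hπ] at this; push_cast at this; nlinarith
      have : Real.cos (a - b) = Real.cos (a - b - 2*Real.pi) := by
        rw [Real.cos_sub_two_pi]
      rw [this]
      apply cos_gt_half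
      rw [abs_lt]
      constructor <;> [nlinarith [hbI.1]; nlinarith [hbI.1]]
    · -- symmetric
      have hb3 : b = Real.pi := by
        have := Int.floor_le (3 * b / Real.pi)
        rw [h.2] at this
        have : Real.pi ≤ b := by
          rw [le_div_iff₀ hπ] at this; push_cast at this; nlinarith
        linarith [hbI.2]
      have ha3 : a < -2/3 * Real.pi := by
        have := Int.lt_floor_add_one (3 * a / Real.pi)
        rw [h.1] at this
        rw [div_lt_iff₀ hπ] at this; push_cast at this; nlinarith
      have : Real.cos (a - b) = Real.cos (a - b + 2*Real.pi) := by
        rw [Real.cos_add_two_pi]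
      rw [this]
      apply cos_gt_half
      rw [abs_lt]
      constructor <;> [nlinarith [haI.1]; nlinarith [haI.1]]
  -- now compute dist
  have hre : (w * (starRingEnd ℂ) z).re = ξ^2 * Real.cos (a - b) := by
    conv_lhs => rw [← Complex.norm_mul_exp_arg_mul_I w, ← Complex.norm_mul_exp_arg_mul_I z]
    rw [hw, hz, ← ha, ← hb']
    rw [map_mul, ← Complex.exp_conj]
    simp only [map_mul, Complex.conj_I, Complex.conj_ofReal]
    have he : (↑ξ : ℂ) * Complex.exp (↑a * Complex.I) * (↑ξ * Complex.exp (↑b * -Complex.I))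
        = (↑(ξ^2) : ℂ) * Complex.exp (↑(a - b) * Complex.I) := by
      rw [mul_mul_mul_comm, ← Complex.exp_add]
      push_cast
      ring_nf
    rw [he, Complex.re_ofReal_mul, Complex.exp_ofReal_mul_I_re]
  have hsq : dist w z ^ 2 = 2 * ξ^2 - 2 * (ξ^2 * Real.cos (a - b)) := by
    rw [Complex.dist_eq, Complex.sq_norm, Complex.normSq_sub, ← hre]
    have : Complex.normSq w = ξ^2 := by rw [← Complex.sq_norm, hw]
    have h2 : Complex.normSq z = ξ^2 := by rw [← Complex.sq_norm, hz]
    rw [this, h2]; ring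
  by_contra hcon
  push_neg at hcon
  have h2 : ξ^2 ≤ dist w z ^ 2 := by nlinarith
  have h3 : (0:ℝ) < ξ^2 := by positivity
  have h4 := mul_lt_mul_of_pos_left hcos h3
  linarith

/-- Proposition 2 (cardinality bound): if all closest neighbors of every point are at
distance exactly ξ > 0, then every point has between 1 and 6 closest neighbors. -/
theorem closest_neighbor_card_bound (N : ℕ) (hN : 2 ≤ N) (ξ : ℝ) (hξ : 0 < ξ)
    (x : Fin N → EuclideanSpace ℝ (Fin 2)) (hinj : Function.Injective x)
    (C : Fin N → Set (Fin N))
    (hC : ∀ i, C i = {j | j ≠ i ∧ ∀ k, k ≠ i → dist (x i) (x j) ≤ dist (x i) (x k)})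
    (hdist : ∀ i, ∀ j ∈ C i, dist (x i) (x j) = ξ) :
    ∀ i, 1 ≤ (C i).ncard ∧ (C i).ncard ≤ 6 := by
  -- every C i is nonempty
  have hne : ∀ i, (C i).Nonempty := by
    intro i
    have hcard : (Finset.univ.erase i).Nonempty := by
      rw [← Finset.card_pos, Finset.card_erase_of_mem (Finset.mem_univ i),
        Finset.card_univ, Fintype.card_fin]
      omega
    obtain ⟨j, hj, hjmin⟩ := Finset.exists_min_image (Finset.univ.erase i)
      (fun j => dist (x i) (x j)) hcard
    refine ⟨j, ?_⟩
    rw [hC i]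
    refine ⟨Finset.ne_of_mem_erase hj, fun k hk => hjmin k ?_⟩
    exact Finset.mem_erase.mpr ⟨hk, Finset.mem_univ k⟩
  -- distances between distinct points are at least ξ
  have hge : ∀ j k : Fin N, j ≠ k → ξ ≤ dist (x j) (x k) := by
    intro j k hjk
    obtain ⟨m, hm⟩ := hne j
    have h1 : dist (x j) (x m) = ξ := hdist j m hm
    rw [hC j] at hm
    have h2 := hm.2 k (Ne.symm hjk)
    linarith
  intro i
  have hfin : (C i).Finite := Set.toFinite _
  constructor
  · rw [Nat.one_le_iff_ne_zero]
    exact fun h => (hne i).ne_empty ((Set.ncard_eq_zero hfin).mp h)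
  · -- isometry to ℂ
    set e : ℂ ≃ₗᵢ[ℝ] EuclideanSpace ℝ (Fin 2) :=
      Complex.isometryOfOrthonormal (EuclideanSpace.basisFun (Fin 2) ℝ) with he
    set f : Fin N → ℤ := fun j => bucketC (e.symm (x j - x i)) with hf
    have habs : ∀ j ∈ C i, ‖e.symm (x j - x i)‖ = ξ := by
      intro j hj
      rw [e.symm.norm_map, ← dist_eq_norm, dist_comm]
      exact hdist i j hj
    have hinjOn : Set.InjOn f (C i) := by
      intro j hj k hk hfeq
      by_contra hjk
      have hd := key (e.symm (x j - x i)) (e.symm (x k - x i)) ξ hξ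
        (habs j hj) (habs k hk) hfeq
      have : dist (e.symm (x j - x i)) (e.symm (x k - x i)) = dist (x j) (x k) := by
        have hv : (x j - x i) - (x k - x i) = x j - x k := by abel
        rw [dist_eq_norm, ← map_sub, hv, e.symm.norm_map, ← dist_eq_norm]
      rw [this] at hd
      exact absurd (hge j k hjk) (not_le.mpr hd)
    have hmaps : ∀ j ∈ C i, f j ∈ (↑(Finset.Ico (0:ℤ) 6) : Set ℤ) := by
      intro j _
      simp only [Finset.coe_Ico, Set.mem_Ico]
      exact ⟨Int.emod_nonneg _ (by norm_num), Int.emod_lt_of_pos _ (by norm_num)⟩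
    have := Set.ncard_le_ncard_of_injOn f hmaps hinjOn
      (Finset.Ico (0:ℤ) 6).finite_toSet
    rwa [Set.ncard_coe_finset, Int.card_Ico] at this
end

section
/- Fix N ≥ 2 and let V = {v : {1,…,N} → {1,…,N} : v(i) ≠ i for all i}. For v ∈ V define E_v = {x ∈ (ℝ²)^N \ S : ∀i, ∀k ∉ {i, v(i)}, ‖x_{v(i)} − x_i‖ < ‖x_k − x_i‖}. Then the sets E_v are open and pairwise disjoint (E_v ∩ E_u = ∅ for u ≠ v), and the union of their closures (in the subspace topology of (ℝ²)^N \ S) covers (ℝ²)^N \ S. -/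
/-- A nonzero real quadratic has finitely many roots. -/
lemma quad_finite (a b c : ℝ) (h : a ≠ 0 ∨ c ≠ 0) :
    {t : ℝ | a * t ^ 2 + b * t + c = 0}.Finite := by
  have hp : (Polynomial.C a * Polynomial.X ^ 2 + Polynomial.C b * Polynomial.X
      + Polynomial.C c) ≠ 0 := by
    intro hzero
    rcases h with h | h
    · have h2 := congrArg (fun p => Polynomial.coeff p 2) hzero
      simp [Polynomial.coeff_C] at h2
      exact h h2
    · have h0 := congrArg (fun p => Polynomial.coeff p 0) hzero
      simp [Polynomial.coeff_C] at h0
      exact h h0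
  have hfin := Polynomial.finite_setOf_isRoot hp
  have : {t : ℝ | a * t ^ 2 + b * t + c = 0}
      = {t : ℝ | Polynomial.IsRoot (Polynomial.C a * Polynomial.X ^ 2 + Polynomial.C b
        * Polynomial.X + Polynomial.C c) t} := by
    ext t
    simp [Polynomial.IsRoot]
  rw [this]
  exact hfin

lemma three_pow_add_ne' {k l i : ℕ} (hkl : k < l) (hik : i ≠ k) (hil : i ≠ l) :
    3 ^ k + 3 ^ l ≠ 2 * 3 ^ i := by
  intro h
  rcases lt_or_gt_of_ne hik with hi | hi
  · -- i < k
    have h1 : (3 : ℕ) ^ (i + 1) ∣ 3 ^ k + 3 ^ l :=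
      dvd_add (pow_dvd_pow 3 hi) (pow_dvd_pow 3 (by omega))
    rw [h, pow_succ] at h1
    have h2 : (3 : ℕ) ^ i * 3 ∣ 3 ^ i * 2 := by rwa [mul_comm 2 (3 ^ i)] at h1
    have h3 : (3 : ℕ) ∣ 2 := by
      have hpos : (3 : ℕ) ^ i ≠ 0 := (pow_pos (by norm_num) i).ne'
      exact (mul_dvd_mul_iff_left hpos).mp h2
    norm_num at h3
  · -- k < i
    have h1 : (3 : ℕ) ^ (k + 1) ∣ 3 ^ l := pow_dvd_pow 3 (by omega)
    have h2 : (3 : ℕ) ^ (k + 1) ∣ 2 * 3 ^ i := Dvd.dvd.mul_left (pow_dvd_pow 3 (by omega)) 2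
    have h3 : (3 : ℕ) ^ (k + 1) ∣ 3 ^ k := by
      have := Nat.dvd_sub h2 h1
      have heq : 2 * 3 ^ i - 3 ^ l = 3 ^ k := by omega
      rwa [heq] at this
    have h4 := Nat.le_of_dvd (pow_pos (by norm_num) k) h3
    have h5 : (3 : ℕ) ^ k < 3 ^ (k + 1) := by
      have : (3 : ℕ) ^ k * 1 < 3 ^ k * 3 := by
        have := pow_pos (show 0 < 3 by norm_num) k
        omega
      simpa [pow_succ] using this
    omega

lemma three_pow_add_ne {k l i : ℕ} (hkl : k ≠ l) (hik : i ≠ k) (hil : i ≠ l) :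
    3 ^ k + 3 ^ l ≠ 2 * 3 ^ i := by
  rcases hkl.lt_or_gt with h | h
  · exact three_pow_add_ne' h hik hil
  · rw [add_comm]
    exact three_pow_add_ne' h hil hik

lemma three_pow_sq_ne {k l i : ℕ} (hik : k ≠ i) (hil : l ≠ i) (hkl : k ≠ l) :
    ((3 : ℝ) ^ k - 3 ^ i) ^ 2 ≠ ((3 : ℝ) ^ l - 3 ^ i) ^ 2 := by
  intro h
  rcases sq_eq_sq_iff_eq_or_eq_neg.mp h with h | h
  · have h3 : (3 : ℝ) ^ k = 3 ^ l := by linarith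
    have hn : (3 : ℕ) ^ k = 3 ^ l := by exact_mod_cast h3
    exact hkl (Nat.pow_right_injective (by norm_num) hn)
  · have h3 : (3 : ℝ) ^ k + 3 ^ l = 2 * 3 ^ i := by linarith
    have hn : (3 : ℕ) ^ k + 3 ^ l = 2 * 3 ^ i := by exact_mod_cast h3
    exact three_pow_add_ne hkl (fun hh => hik hh.symm) (fun hh => hil hh.symm) hn

/-- The pieces E_v (configurations where v(i) is the strict unique nearest neighbor of
every i) are open and pairwise disjoint, and the union of their closures in the
subspace topology of the non-degenerate configurations covers that set. -/
theorem pieces_open_disjoint_cover (N : ℕ) (hN : 2 ≤ N)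
    (S : Set (Fin N → EuclideanSpace ℝ (Fin 2)))
    (hS : S = {x | ∃ i j : Fin N, i ≠ j ∧ x i = x j})
    (V : Set (Fin N → Fin N)) (hV : V = {v | ∀ i, v i ≠ i})
    (E : (Fin N → Fin N) → Set (Fin N → EuclideanSpace ℝ (Fin 2)))
    (hE : ∀ v, E v = {x | x ∉ S ∧ ∀ i, ∀ k, k ≠ i → k ≠ v i →
      dist (x (v i)) (x i) < dist (x k) (x i)}) :
    (∀ v ∈ V, IsOpen (E v)) ∧
    (∀ u ∈ V, ∀ v ∈ V, u ≠ v → E u ∩ E v = ∅) ∧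
    (Sᶜ ⊆ ⋃ v ∈ V, (closure (E v) ∩ Sᶜ)) := by
  have hSclosed : IsClosed S := by
    rw [hS]
    have : {x : Fin N → EuclideanSpace ℝ (Fin 2) | ∃ i j : Fin N, i ≠ j ∧ x i = x j}
        = ⋃ i : Fin N, ⋃ j : Fin N, {x | i ≠ j ∧ x i = x j} := by
      ext x; simp
    rw [this]
    refine isClosed_iUnion_of_finite fun i => isClosed_iUnion_of_finite fun j => ?_
    by_cases hij : i = j
    · have : {x : Fin N → EuclideanSpace ℝ (Fin 2) | i ≠ j ∧ x i = x j} = ∅ := by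
        ext x; simp [hij]
      rw [this]; exact isClosed_empty
    · have : {x : Fin N → EuclideanSpace ℝ (Fin 2) | i ≠ j ∧ x i = x j}
          = {x | x i = x j} := by ext x; simp [hij]
      rw [this]
      exact isClosed_eq (continuous_apply i) (continuous_apply j)
  refine ⟨?_, ?_, ?_⟩
  · -- openness
    intro v _
    rw [hE]
    have : {x : Fin N → EuclideanSpace ℝ (Fin 2) | x ∉ S ∧ ∀ i, ∀ k, k ≠ i → k ≠ v i →
        dist (x (v i)) (x i) < dist (x k) (x i)}
        = Sᶜ ∩ ⋂ i : Fin N, ⋂ k : Fin N,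
          {x | k ≠ i → k ≠ v i → dist (x (v i)) (x i) < dist (x k) (x i)} := by
      ext x; simp [Set.mem_iInter]
    rw [this]
    refine IsOpen.inter hSclosed.isOpen_compl ?_
    refine isOpen_iInter_of_finite fun i => isOpen_iInter_of_finite fun k => ?_
    by_cases h1 : k ≠ i
    · by_cases h2 : k ≠ v i
      · have : {x : Fin N → EuclideanSpace ℝ (Fin 2) | k ≠ i → k ≠ v i →
            dist (x (v i)) (x i) < dist (x k) (x i)}
            = {x | dist (x (v i)) (x i) < dist (x k) (x i)} := by
          ext x; simp [h1, h2]
        rw [this]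
        exact isOpen_lt (((continuous_apply (v i)).dist (continuous_apply i)))
          ((continuous_apply k).dist (continuous_apply i))
      · have : {x : Fin N → EuclideanSpace ℝ (Fin 2) | k ≠ i → k ≠ v i →
            dist (x (v i)) (x i) < dist (x k) (x i)} = Set.univ := by
          ext x; simp; intro _ h; exact absurd h h2
        rw [this]; exact isOpen_univ
    · have : {x : Fin N → EuclideanSpace ℝ (Fin 2) | k ≠ i → k ≠ v i →
          dist (x (v i)) (x i) < dist (x k) (x i)} = Set.univ := by
        ext x; simp; intro h; exact absurd h h1
      rw [this]; exact isOpen_univ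
  · -- disjointness
    intro u hu v hv huv
    rw [hV] at hu hv
    ext y
    simp only [Set.mem_inter_iff, Set.mem_empty_iff_false, iff_false, not_and]
    intro hyu hyv
    rw [hE] at hyu hyv
    obtain ⟨-, h1⟩ := hyu
    obtain ⟨-, h2⟩ := hyv
    have : ∃ i, u i ≠ v i := by
      by_contra hc
      push_neg at hc
      exact huv (funext hc)
    obtain ⟨i, hi⟩ := this
    have ha := h1 i (v i) (hv i) (Ne.symm hi)
    have hb := h2 i (u i) (hu i) hi
    exact absurd hb (not_lt.mpr ha.le)
  · -- covering by closures
    intro x hx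
    have hxS : x ∉ S := hx
    have hsep : ∀ i j : Fin N, i ≠ j → x i ≠ x j := by
      intro i j hij heq
      exact hxS (hS ▸ ⟨i, j, hij, heq⟩)
    have hVfin : V.Finite := Set.toFinite V
    suffices h : x ∈ closure (⋃ v ∈ V, E v) by
      rw [hVfin.closure_biUnion] at h
      simp only [Set.mem_iUnion] at h ⊢
      obtain ⟨v, hv, hxv⟩ := h
      exact ⟨v, hv, hxv, hx⟩
    rw [Metric.mem_closure_iff]
    intro ε hε
    classical
    set e : EuclideanSpace ℝ (Fin 2) := EuclideanSpace.single 0 1 with he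
    have hne : ‖e‖ = 1 := by simp [he]
    set c : Fin N → ℝ := fun i => 3 ^ (i : ℕ) with hc
    set Y : ℝ → Fin N → EuclideanSpace ℝ (Fin 2) := fun t i => x i + (t * c i) • e with hY
    have hYsub : ∀ (t : ℝ) (i k : Fin N),
        Y t k - Y t i = (x k - x i) + (t * (c k - c i)) • e := by
      intro t i k
      simp only [hY]
      rw [show t * (c k - c i) = t * c k - t * c i by ring, sub_smul]
      abel
    have hexpand : ∀ (i k : Fin N) (t : ℝ),
        ‖Y t k - Y t i‖ ^ 2 = ((c k - c i) ^ 2) * t ^ 2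
          + (2 * (c k - c i) * (inner ℝ (x k - x i) e : ℝ)) * t + ‖x k - x i‖ ^ 2 := by
      intro i k t
      rw [hYsub, norm_add_sq_real, real_inner_smul_right, norm_smul]
      rw [mul_pow, Real.norm_eq_abs, sq_abs, hne]
      ring
    have hcne : ∀ i k : Fin N, k ≠ i → c k - c i ≠ 0 := by
      intro i k hki
      simp only [hc]
      intro hcc
      have : (3:ℝ) ^ (k:ℕ) = 3 ^ (i:ℕ) := by linarith
      have hn : (3:ℕ) ^ (k:ℕ) = 3 ^ (i:ℕ) := by exact_mod_cast this
      exact hki (Fin.val_injective (Nat.pow_right_injective (by norm_num) hn))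
    have hfin3 : ∀ i k l : Fin N,
        {t : ℝ | k ≠ i ∧ l ≠ i ∧ k ≠ l ∧ ‖Y t k - Y t i‖ ^ 2 = ‖Y t l - Y t i‖ ^ 2}.Finite := by
      intro i k l
      by_cases hcond : k ≠ i ∧ l ≠ i ∧ k ≠ l
      · obtain ⟨h1, h2, h3⟩ := hcond
        refine Set.Finite.subset (quad_finite ((c k - c i) ^ 2 - (c l - c i) ^ 2)
          (2 * (c k - c i) * (inner ℝ (x k - x i) e : ℝ)
            - 2 * (c l - c i) * (inner ℝ (x l - x i) e : ℝ))
          (‖x k - x i‖ ^ 2 - ‖x l - x i‖ ^ 2) (Or.inl ?_)) ?_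
        · simp only [hc]
          exact sub_ne_zero.mpr (three_pow_sq_ne (Fin.val_injective.ne h1)
            (Fin.val_injective.ne h2) (Fin.val_injective.ne h3))
        · intro t ht
          have heq := ht.2.2.2
          rw [hexpand, hexpand] at heq
          simp only [Set.mem_setOf_eq]
          linarith
      · refine Set.Finite.subset Set.finite_empty fun t ht => ?_
        exact absurd ⟨ht.1, ht.2.1, ht.2.2.1⟩ hcond
    have hfin2 : ∀ i k : Fin N, {t : ℝ | k ≠ i ∧ ‖Y t k - Y t i‖ ^ 2 = 0}.Finite := by
      intro i k
      by_cases hki : k ≠ i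
      · refine Set.Finite.subset (quad_finite ((c k - c i) ^ 2)
          (2 * (c k - c i) * (inner ℝ (x k - x i) e : ℝ)) (‖x k - x i‖ ^ 2) (Or.inr ?_)) ?_
        · exact pow_ne_zero 2 (norm_ne_zero_iff.mpr (sub_ne_zero.mpr (hsep k i hki)))
        · intro t ht
          have heq := ht.2
          rw [hexpand] at heq
          simpa using heq
      · refine Set.Finite.subset Set.finite_empty fun t ht => ?_
        exact absurd ht.1 hki
    set B : Set ℝ := (⋃ i : Fin N, ⋃ k : Fin N, ⋃ l : Fin N,
        {t : ℝ | k ≠ i ∧ l ≠ i ∧ k ≠ l ∧ ‖Y t k - Y t i‖ ^ 2 = ‖Y t l - Y t i‖ ^ 2})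
      ∪ (⋃ i : Fin N, ⋃ k : Fin N, {t : ℝ | k ≠ i ∧ ‖Y t k - Y t i‖ ^ 2 = 0}) with hB
    have hBfin : B.Finite := by
      refine Set.Finite.union ?_ ?_
      · exact Set.finite_iUnion fun i => Set.finite_iUnion fun k =>
          Set.finite_iUnion fun l => hfin3 i k l
      · exact Set.finite_iUnion fun i => Set.finite_iUnion fun k => hfin2 i k
    have h3N : (0:ℝ) < 3 ^ N := by positivity
    have hδ : (0:ℝ) < ε / 3 ^ N := div_pos hε h3N
    obtain ⟨t, ht⟩ := ((Set.Ioo_infinite hδ).diff hBfin).nonempty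
    have ht0 : 0 < t := ht.1.1
    have htδ : t < ε / 3 ^ N := ht.1.2
    have htB : t ∉ B := ht.2
    have hgood3 : ∀ i k l : Fin N, k ≠ i → l ≠ i → k ≠ l →
        ‖Y t k - Y t i‖ ^ 2 ≠ ‖Y t l - Y t i‖ ^ 2 := by
      intro i k l h1 h2 h3 heq
      exact htB (Or.inl (Set.mem_iUnion.mpr ⟨i, Set.mem_iUnion.mpr ⟨k,
        Set.mem_iUnion.mpr ⟨l, ⟨h1, h2, h3, heq⟩⟩⟩⟩))
    have hgood2 : ∀ i k : Fin N, k ≠ i → Y t k ≠ Y t i := by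
      intro i k h1 heq
      refine htB (Or.inr (Set.mem_iUnion.mpr ⟨i, Set.mem_iUnion.mpr ⟨k, ⟨h1, ?_⟩⟩⟩))
      rw [heq, sub_self, norm_zero]
      ring
    set y : Fin N → EuclideanSpace ℝ (Fin 2) := Y t with hy
    have hyS : y ∉ S := by
      rw [hS]
      rintro ⟨i, j, hij, heq⟩
      exact hgood2 j i hij heq
    have hnontriv : Nontrivial (Fin N) := Fin.nontrivial_iff_two_le.mpr hN
    have hminex : ∀ i : Fin N, ∃ k, k ≠ i ∧ ∀ k', k' ≠ i →
        dist (y k) (y i) ≤ dist (y k') (y i) := by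
      intro i
      obtain ⟨j, hj⟩ := exists_ne i
      obtain ⟨k, hk, hkmin⟩ := Finset.exists_min_image (Finset.univ.erase i)
        (fun k => dist (y k) (y i)) ⟨j, Finset.mem_erase.mpr ⟨hj, Finset.mem_univ _⟩⟩
      exact ⟨k, (Finset.mem_erase.mp hk).1,
        fun k' hk' => hkmin k' (Finset.mem_erase.mpr ⟨hk', Finset.mem_univ _⟩)⟩
    choose v hv1 hv2 using hminex
    have hvV : v ∈ V := by rw [hV]; exact hv1
    refine ⟨y, ?_, ?_⟩
    · refine Set.mem_biUnion hvV ?_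
      rw [hE]
      refine ⟨hyS, ?_⟩
      intro i k hki hkvi
      refine lt_of_le_of_ne (hv2 i k hki) fun heq => ?_
      apply hgood3 i (v i) k (hv1 i) hki (Ne.symm hkvi)
      rw [dist_eq_norm, dist_eq_norm] at heq
      rw [heq]
    · rw [dist_pi_lt_iff hε]
      intro i
      have hdi : dist (x i) (y i) = ‖(t * c i) • e‖ := by
        simp only [hy, hY, dist_eq_norm]
        rw [show x i - (x i + (t * c i) • e) = -((t * c i) • e) by abel, norm_neg]
      rw [hdi, norm_smul, hne, mul_one, Real.norm_eq_abs]
      have hci : (0:ℝ) < c i := by simp only [hc]; positivity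
      rw [abs_of_pos (mul_pos ht0 hci)]
      have h1 : c i ≤ 3 ^ N := by
        simp only [hc]
        exact pow_le_pow_right₀ (by norm_num) i.isLt.le
      calc t * c i ≤ t * 3 ^ N := by nlinarith
        _ < (ε / 3 ^ N) * 3 ^ N := by nlinarith
        _ = ε := div_mul_cancel₀ ε h3N.ne'
end

section
/- Suppose x : [0, L) → (ℝ²)^N is a differentiable trajectory of the nearest-neighbor attraction–repulsion system with ξ > 0, on a time interval where indices h, k satisfy: h is the unique nearest neighbor of k, k is the unique nearest neighbor of h, and ‖x_h(t) − x_k(t)‖ ≤ ε < ξ. Then d/dt ‖x_h(t) − x_k(t)‖² ≥ 4(ξ² − ε²)·(‖x_h − x_k‖²)/ξ² > 0 whenever x_h ≠ x_k; in particular ‖x_h(t) − x_k(t)‖ is strictly increasing on that interval. -/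
/-- Key estimate of Theorem 1: if two animals are mutually nearest neighbors and closer
than ε < ξ on a time interval, the time derivative of their squared distance is bounded
below by 4(ξ² − ε²)‖x_h − x_k‖²/ξ² > 0, so their distance is strictly increasing. -/
theorem mutual_neighbors_repel (N : ℕ) (hN : 2 ≤ N) (ξ ε L : ℝ)
    (hξ : 0 < ξ) (hε : 0 ≤ ε) (hεξ : ε < ξ) (hL : 0 < L)
    (x : ℝ → Fin N → EuclideanSpace ℝ (Fin 2)) (h k : Fin N) (hhk : h ≠ k)
    (hne : ∀ t ∈ Set.Ico (0:ℝ) L, x t h ≠ x t k)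
    (hclose : ∀ t ∈ Set.Ico (0:ℝ) L, ‖x t h - x t k‖ ≤ ε)
    (hodeh : ∀ t ∈ Set.Ico (0:ℝ) L, HasDerivAt (fun s => x s h)
      ((x t k - x t h) - (ξ^2 / ‖x t k - x t h‖^2) • (x t k - x t h)) t)
    (hodek : ∀ t ∈ Set.Ico (0:ℝ) L, HasDerivAt (fun s => x s k)
      ((x t h - x t k) - (ξ^2 / ‖x t h - x t k‖^2) • (x t h - x t k)) t) :
    (∀ t ∈ Set.Ico (0:ℝ) L, ∃ d : ℝ,
      HasDerivAt (fun s => ‖x s h - x s k‖^2) d t ∧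
      4 * (ξ^2 - ε^2) * ‖x t h - x t k‖^2 / ξ^2 ≤ d ∧ 0 < d) ∧
    StrictMonoOn (fun t => ‖x t h - x t k‖) (Set.Ico (0:ℝ) L) := by
  have key : ∀ t ∈ Set.Ico (0:ℝ) L,
      HasDerivAt (fun s => ‖x s h - x s k‖^2)
        (4*ξ^2 - 4*‖x t h - x t k‖^2) t := by
    intro t ht
    have hn0 : ‖x t h - x t k‖ ≠ 0 := by
      simpa [sub_eq_zero] using hne t ht
    have hn2 : ‖x t h - x t k‖^2 ≠ 0 := pow_ne_zero _ hn0
    have hw' : HasDerivAt (fun s => x s h - x s k)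
        ((((x t k - x t h) - (ξ^2 / ‖x t k - x t h‖^2) • (x t k - x t h)))
         - (((x t h - x t k) - (ξ^2 / ‖x t h - x t k‖^2) • (x t h - x t k)))) t :=
      (hodeh t ht).sub (hodek t ht)
    have hinner : HasDerivAt (fun s => (inner ℝ (x s h - x s k) (x s h - x s k) : ℝ)) _ t :=
      hw'.inner ℝ hw'
    have heq : (fun s => (inner ℝ (x s h - x s k) (x s h - x s k) : ℝ))
        = fun s => ‖x s h - x s k‖^2 := by
      funext s; rw [real_inner_self_eq_norm_sq]
    rw [heq] at hinner
    convert hinner using 1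
    have hrev : ‖x t k - x t h‖ = ‖x t h - x t k‖ := norm_sub_rev _ _
    have hswap : x t k - x t h = -(x t h - x t k) := by abel
    rw [hrev, hswap]
    set a := x t h - x t k with ha
    rw [real_inner_comm a (-a - _ - _)]
    simp only [inner_sub_right, inner_smul_right, inner_neg_right,
      real_inner_self_eq_norm_sq]
    have hcoord : a 0 ^ 2 + a 1 ^ 2 = ‖a‖ ^ 2 := by
      rw [← real_inner_self_eq_norm_sq, PiLp.inner_apply]
      simp [Fin.sum_univ_two, sq]
    field_simp
    linear_combination (0:ℝ) * hcoord
  constructor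
  · intro t ht
    refine ⟨_, key t ht, ?_, ?_⟩
    · rw [div_le_iff₀ (by positivity)]
      have h1 : ‖x t h - x t k‖^2 ≤ ε^2 := by
        have := hclose t ht
        nlinarith [norm_nonneg (x t h - x t k)]
      have h2 : ε^2 ≤ ξ^2 := by nlinarith
      nlinarith [mul_nonneg (sub_nonneg.2 h1) (sub_nonneg.2 h2),
        sq_nonneg (ξ^2 - ε^2), mul_le_mul_of_nonneg_right h1 (sq_nonneg ξ)]
    · have h1 : ‖x t h - x t k‖^2 ≤ ε^2 := by
        have := hclose t ht
        nlinarith [norm_nonneg (x t h - x t k)]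
      nlinarith
  · have hsq : StrictMonoOn (fun s => ‖x s h - x s k‖^2) (Set.Ico (0:ℝ) L) := by
      apply StrictMonoOn.mono (s := Set.Ico (0:ℝ) L) ?_ le_rfl
      apply strictMonoOn_of_deriv_pos (convex_Ico 0 L)
      · intro t ht
        exact ((key t ht).continuousAt).continuousWithinAt
      · intro t ht
        rw [interior_Ico] at ht
        have ht' : t ∈ Set.Ico (0:ℝ) L := ⟨le_of_lt ht.1, ht.2⟩
        rw [(key t ht').deriv]
        have h1 : ‖x t h - x t k‖^2 ≤ ε^2 := by
          have := hclose t ht'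
          nlinarith [norm_nonneg (x t h - x t k)]
        nlinarith
    intro a ha b hb hab
    have := hsq ha hb hab
    simp only at this ⊢
    nlinarith [norm_nonneg (x a h - x a k), norm_nonneg (x b h - x b k)]
end

section
/- If six points lie on a circle of radius ξ > 0 centered at p ∈ ℝ² and are pairwise at distance ≥ ξ, then they are exactly the vertices of a regular hexagon inscribed in the circle, i.e., consecutive points (in angular order) subtend angles of exactly 60° at p. -/
set_option linter.unusedVariables false
open Real

lemma angle_range (d : ℝ) (h0 : 0 ≤ d) (h2 : d < 2*π) (hc : Real.cos d ≤ 1/2) :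
    π/3 ≤ d ∧ d ≤ 5*π/3 := by
  have hπ := Real.pi_pos
  constructor
  · by_contra h
    push_neg at h
    have := Real.cos_lt_cos_of_nonneg_of_le_pi h0 (by linarith) h
    rw [Real.cos_pi_div_three] at this
    linarith
  · by_contra h
    push_neg at h
    have h1 : 0 ≤ 2*π - d := by linarith
    have h3 : 2*π - d < π/3 := by linarith
    have := Real.cos_lt_cos_of_nonneg_of_le_pi h1 (by linarith) h3
    rw [Real.cos_pi_div_three, Real.cos_two_pi_sub] at this
    linarith


/-- Rigidity: six points on a circle of radius ξ, pairwise at distance at least ξ, are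
exactly the vertices of a regular hexagon inscribed in that circle: after a permutation,
the k-th point sits at angle θ + k·60°. -/
theorem six_points_regular_hexagon (ξ : ℝ) (hξ : 0 < ξ)
    (p : EuclideanSpace ℝ (Fin 2)) (x : Fin 6 → EuclideanSpace ℝ (Fin 2))
    (hinj : Function.Injective x)
    (hcirc : ∀ i, dist (x i) p = ξ)
    (hsep : ∀ i j, i ≠ j → ξ ≤ dist (x i) (x j)) :
    ∃ (θ : ℝ) (σ : Equiv.Perm (Fin 6)), ∀ k : Fin 6,
      x (σ k) 0 = p 0 + ξ * Real.cos (θ + (k : ℕ) * (π / 3)) ∧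
      x (σ k) 1 = p 1 + ξ * Real.sin (θ + (k : ℕ) * (π / 3)) := by
  have hπ := Real.pi_pos
  set z : Fin 6 → ℂ := fun i => (x i 0 - p 0 : ℝ) + (x i 1 - p 1 : ℝ) * Complex.I with hz
  have hdist2 : ∀ (u v : EuclideanSpace ℝ (Fin 2)),
      dist u v ^ 2 = (u 0 - v 0)^2 + (u 1 - v 1)^2 := by
    intro u v
    rw [EuclideanSpace.dist_eq, Real.sq_sqrt (by positivity)]
    simp [Fin.sum_univ_two, Real.dist_eq, sq_abs]
  have habs : ∀ i, ‖z i‖ = ξ := by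
    intro i
    have h1 : (x i 0 - p 0)^2 + (x i 1 - p 1)^2 = ξ^2 := by
      rw [← hdist2, hcirc]
    rw [Complex.norm_def, hz]
    simp only [Complex.normSq_add_mul_I]
    rw [h1, Real.sqrt_sq hξ.le]
  have hne : ∀ i, z i ≠ 0 := by
    intro i h
    have := habs i
    rw [h] at this
    simp at this
    linarith
  set a : Fin 6 → ℝ := fun i => (z i).arg with ha
  have hre : ∀ i, x i 0 = p 0 + ξ * Real.cos (a i) := by
    intro i
    have := Complex.cos_arg (hne i)
    rw [habs i] at this
    have hzre : (z i).re = x i 0 - p 0 := by simp [hz]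
    rw [hzre] at this
    field_simp at this
    linarith
  have him : ∀ i, x i 1 = p 1 + ξ * Real.sin (a i) := by
    intro i
    have := Complex.sin_arg (z i)
    rw [habs i] at this
    have hzim : (z i).im = x i 1 - p 1 := by simp [hz]
    rw [hzim] at this
    field_simp at this
    linarith
  have hcos : ∀ i j, i ≠ j → Real.cos (a i - a j) ≤ 1/2 := by
    intro i j hij
    have h1 : ξ ≤ dist (x i) (x j) := hsep i j hij
    have h2 : ξ^2 ≤ dist (x i) (x j)^2 := by nlinarith [dist_nonneg (x := x i) (y := x j)]
    rw [hdist2, hre i, hre j, him i, him j] at h2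
    have hq1 : ξ^2 * Real.sin (a i)^2 + ξ^2 * Real.cos (a i)^2 = ξ^2 := by
      linear_combination ξ^2 * Real.sin_sq_add_cos_sq (a i)
    have hq2 : ξ^2 * Real.sin (a j)^2 + ξ^2 * Real.cos (a j)^2 = ξ^2 := by
      linear_combination ξ^2 * Real.sin_sq_add_cos_sq (a j)
    have h3 : ξ^2 * Real.cos (a i - a j) ≤ ξ^2 * (1/2) := by
      rw [Real.cos_sub]
      nlinarith [h2, hq1, hq2]
    have := le_of_mul_le_mul_left h3 (by positivity : (0:ℝ) < ξ^2)
    linarith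
  set σ := Tuple.sort a with hσ
  have hmono : Monotone (a ∘ σ) := Tuple.monotone_sort a
  have hgap : ∀ i j : Fin 6, i < j → π/3 ≤ a (σ j) - a (σ i) ∧ a (σ j) - a (σ i) ≤ 5*π/3 := by
    intro i j hij
    have hne' : σ i ≠ σ j := fun h => absurd (σ.injective h) (ne_of_lt hij)
    have hc := hcos (σ j) (σ i) (Ne.symm hne')
    have h0 : 0 ≤ a (σ j) - a (σ i) := by
      have := hmono hij.le
      simpa using this
    have h2 : a (σ j) - a (σ i) < 2*π := by
      have := Complex.arg_le_pi (z (σ j))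
      have := Complex.neg_pi_lt_arg (z (σ i))
      simp only [ha]
      linarith
    exact angle_range _ h0 h2 hc
  have g01 := hgap 0 1 (by decide)
  have g12 := hgap 1 2 (by decide)
  have g23 := hgap 2 3 (by decide)
  have g34 := hgap 3 4 (by decide)
  have g45 := hgap 4 5 (by decide)
  have g05 := hgap 0 5 (by decide)
  have e1 : a (σ 1) = a (σ 0) + π/3 := by linarith [g01.1, g12.1, g23.1, g34.1, g45.1, g05.2]
  have e2 : a (σ 2) = a (σ 0) + 2*(π/3) := by linarith [g01.1, g12.1, g23.1, g34.1, g45.1, g05.2]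
  have e3 : a (σ 3) = a (σ 0) + 3*(π/3) := by linarith [g01.1, g12.1, g23.1, g34.1, g45.1, g05.2]
  have e4 : a (σ 4) = a (σ 0) + 4*(π/3) := by linarith [g01.1, g12.1, g23.1, g34.1, g45.1, g05.2]
  have e5 : a (σ 5) = a (σ 0) + 5*(π/3) := by linarith [g01.1, g12.1, g23.1, g34.1, g45.1, g05.2]
  have hek : ∀ k : Fin 6, a (σ k) = a (σ 0) + ((k : ℕ) : ℝ) * (π/3) := by
    intro k
    fin_cases k
    · show a (σ 0) = a (σ 0) + ((0:ℕ) : ℝ) * (π/3); norm_num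
    · show a (σ 1) = a (σ 0) + ((1:ℕ) : ℝ) * (π/3); rw [e1]; norm_num
    · show a (σ 2) = a (σ 0) + ((2:ℕ) : ℝ) * (π/3); rw [e2]; norm_num
    · show a (σ 3) = a (σ 0) + ((3:ℕ) : ℝ) * (π/3); rw [e3]; push_cast; ring
    · show a (σ 4) = a (σ 0) + ((4:ℕ) : ℝ) * (π/3); rw [e4]; push_cast; ring
    · show a (σ 5) = a (σ 0) + ((5:ℕ) : ℝ) * (π/3); rw [e5]; push_cast; ring
  refine ⟨a (σ 0), σ, fun k => ⟨?_, ?_⟩⟩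
  · rw [hre (σ k), hek k]
  · rw [him (σ k), hek k]
end
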